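/- Let g(s) = √((1−s)² + (s/κ)²) for κ ≥ 1. Then for every p > 1 there is a constant C_p such that ∫₀¹ g(s)^{−p} ds ≤ C_p κ^{p−1}, and for p = 1, ∫₀¹ g(s)^{−1} ds = O(log κ). -/

import Mathlib

open Real

private lemma g_pos {κ : ℝ} (hκ : 1 ≤ κ) (s : ℝ) :
    0 < Real.sqrt ((1 - s) ^ 2 + (s / κ) ^ 2) := by
  apply Real.sqrt_pos.mpr
  rcases eq_or_ne s 1 with h | h
  · have hκ0 : (0:ℝ) < κ := lt_of_lt_of_le one_pos hκ
    rw [h]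
    have : (0:ℝ) < (1 / κ) ^ 2 := by positivity
    simpa using this
  · have h1 : (1 - s) ≠ 0 := sub_ne_zero.mpr (Ne.symm h)
    have : (0:ℝ) < (1 - s) ^ 2 := pow_two_pos_of_ne_zero h1
    nlinarith [sq_nonneg (s / κ)]

private lemma g_ge_one_sub {κ s : ℝ} (hs : s ≤ 1) :
    1 - s ≤ Real.sqrt ((1 - s) ^ 2 + (s / κ) ^ 2) := by
  apply Real.le_sqrt_of_sq_le
  nlinarith [sq_nonneg (s / κ)]

private lemma g_ge_inv {κ s : ℝ} (hκ : 1 ≤ κ) (hs0 : 0 ≤ s) (hs1 : s ≤ 1) :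
    (2 * κ)⁻¹ ≤ Real.sqrt ((1 - s) ^ 2 + (s / κ) ^ 2) := by
  have hκ0 : (0:ℝ) < κ := lt_of_lt_of_le one_pos hκ
  apply Real.le_sqrt_of_sq_le
  have hk1 : (0:ℝ) < 1 / κ := by positivity
  have hsum : 1 / κ ≤ (1 - s) + s / κ := by
    have h1 : 0 ≤ (1 - s) * (1 - 1 / κ) := by
      apply mul_nonneg (by linarith)
      have : 1 / κ ≤ 1 := by rw [div_le_one hκ0]; exact hκ
      linarith
    have h2 : (1 - s) + s / κ - 1 / κ = (1 - s) * (1 - 1 / κ) := by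
      field_simp; ring
    linarith
  have key : (1 / κ) ^ 2 ≤ 2 * ((1 - s) ^ 2 + (s / κ) ^ 2) := by
    nlinarith [sq_nonneg ((1 - s) - s / κ), mul_self_le_mul_self hk1.le hsum]
  have hinv : ((2 * κ)⁻¹) ^ 2 = (1 / κ) ^ 2 / 4 := by
    field_simp; ring
  rw [hinv]
  nlinarith [sq_nonneg (1 / κ)]

private lemma g_cont {κ : ℝ} :
    Continuous (fun s : ℝ => Real.sqrt ((1 - s) ^ 2 + (s / κ) ^ 2)) := by
  apply Real.continuous_sqrt.comp
  continuity

/-- QLSP gap integrals.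
For the QLSP gap `g(s) = √((1−s)² + (s/κ)²)` with `κ ≥ 1`: for every `p > 1`
there is a constant `C_p` with `∫₀¹ g(s)^{−p} ds ≤ C_p κ^{p−1}`; and for
`p = 1`, `∫₀¹ g(s)^{−1} ds = O(log κ)` (formulated as `≤ C (1 + log κ)`). -/
theorem statement16 :
    (∀ p : ℝ, 1 < p → ∃ C > (0:ℝ), ∀ κ : ℝ, 1 ≤ κ →
      (∫ s in (0:ℝ)..1,
          (Real.sqrt ((1 - s) ^ 2 + (s / κ) ^ 2)) ^ (-p))
        ≤ C * κ ^ (p - 1)) ∧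
    (∃ C > (0:ℝ), ∀ κ : ℝ, 1 ≤ κ →
      (∫ s in (0:ℝ)..1,
          (Real.sqrt ((1 - s) ^ 2 + (s / κ) ^ 2))⁻¹)
        ≤ C * (1 + Real.log κ)) := by
  constructor
  · -- p > 1 case
    intro p hp
    have hp1 : (0:ℝ) < p - 1 := by linarith
    refine ⟨(p - 1)⁻¹ + 2 ^ p, by positivity, ?_⟩
    intro κ hκ
    have hκ0 : (0:ℝ) < κ := lt_of_lt_of_le one_pos hκ
    have hκi : (0:ℝ) < κ⁻¹ := by positivity
    have hκi1 : κ⁻¹ ≤ 1 := by rw [inv_le_one_iff₀]; right; exact hκ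
    set m : ℝ := 1 - κ⁻¹ with hm
    have hm0 : 0 ≤ m := by simp only [hm]; linarith
    have hm1 : m ≤ 1 := by simp only [hm]; linarith
    set f : ℝ → ℝ := fun s => (Real.sqrt ((1 - s) ^ 2 + (s / κ) ^ 2)) ^ (-p) with hf
    have hfc : Continuous f := by
      apply g_cont.rpow_const
      intro x; exact Or.inl (ne_of_gt (g_pos hκ x))
    have hsplit : (∫ s in (0:ℝ)..1, f s) =
        (∫ s in (0:ℝ)..m, f s) + ∫ s in m..1, f s :=
      (intervalIntegral.integral_add_adjacent_intervals
        (hfc.intervalIntegrable 0 m) (hfc.intervalIntegrable m 1)).symm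
    have hcx : ContinuousOn (fun s : ℝ => (1 - s) ^ (-p)) (Set.uIcc 0 m) := by
      apply ContinuousOn.rpow_const (by fun_prop)
      intro x hx
      rw [Set.uIcc_of_le hm0] at hx
      left
      have hxm : x ≤ m := hx.2
      have hle : κ⁻¹ ≤ 1 - x := by simp only [hm] at hxm ⊢; linarith
      exact ne_of_gt (lt_of_lt_of_le hκi hle)
    have hκp1 : (0:ℝ) < κ ^ (p - 1) := Real.rpow_pos_of_pos hκ0 _
    have hI1 : (∫ s in (0:ℝ)..m, f s) ≤ (p - 1)⁻¹ * κ ^ (p - 1) := by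
      have hmono : (∫ s in (0:ℝ)..m, f s) ≤ ∫ s in (0:ℝ)..m, (1 - s) ^ (-p) := by
        apply intervalIntegral.integral_mono_on hm0
          (hfc.intervalIntegrable 0 m) hcx.intervalIntegrable
        intro x hx
        have hx1 : x ≤ m := hx.2
        have hpos : 0 < 1 - x := by
          have : κ⁻¹ ≤ 1 - x := by simp only [hm] at hx1 ⊢; linarith
          linarith
        exact Real.rpow_le_rpow_of_nonpos hpos (g_ge_one_sub (by linarith))
          (by linarith)
      have hcomp : (∫ s in (0:ℝ)..m, (1 - s) ^ (-p)) = ∫ x in κ⁻¹..(1:ℝ), x ^ (-p) := by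
        have h := intervalIntegral.integral_comp_sub_left (a := (0:ℝ)) (b := m)
          (fun x : ℝ => x ^ (-p)) 1
        simpa [hm] using h
      have h0notin : (0:ℝ) ∉ Set.uIcc κ⁻¹ (1:ℝ) := by
        rw [Set.uIcc_of_le hκi1]
        intro h; exact absurd h.1 (not_le.mpr hκi)
      have hexp : (κ⁻¹ : ℝ) ^ (-p + 1) = κ ^ (p - 1) := by
        rw [show (-p + 1) = -(p - 1) by ring, Real.rpow_neg (by positivity),
          Real.inv_rpow hκ0.le, inv_inv]
      have hval : (∫ x in κ⁻¹..(1:ℝ), x ^ (-p)) = (κ ^ (p - 1) - 1) / (p - 1) := by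
        rw [integral_rpow (Or.inr ⟨by intro h; linarith [neg_injective h], h0notin⟩),
          Real.one_rpow, hexp]
        rw [div_eq_div_iff (by linarith : (-p + 1 : ℝ) ≠ 0) (ne_of_gt hp1)]
        ring
      calc (∫ s in (0:ℝ)..m, f s) ≤ (κ ^ (p - 1) - 1) / (p - 1) := by
            rw [← hval, ← hcomp]; exact hmono
        _ ≤ (p - 1)⁻¹ * κ ^ (p - 1) := by
            rw [div_eq_inv_mul]
            exact mul_le_mul_of_nonneg_left (by linarith) (by positivity)
    have hI2 : (∫ s in m..1, f s) ≤ 2 ^ p * κ ^ (p - 1) := by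
      have hmono : (∫ s in m..1, f s) ≤ ∫ _ in m..1, (2 * κ) ^ p := by
        apply intervalIntegral.integral_mono_on hm1
          (hfc.intervalIntegrable m 1) intervalIntegrable_const
        intro x hx
        have h2κ : (0:ℝ) < (2 * κ)⁻¹ := by positivity
        have hb := Real.rpow_le_rpow_of_nonpos h2κ
          (g_ge_inv hκ (le_trans hm0 hx.1) hx.2) (by linarith : -p ≤ 0)
        rwa [Real.inv_rpow (by positivity), ← Real.rpow_neg (by positivity),
          neg_neg] at hb
      have hconst : (∫ _ in m..1, (2 * κ) ^ p : ℝ) = κ⁻¹ * (2 * κ) ^ p := by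
        rw [intervalIntegral.integral_const, smul_eq_mul, hm]
        ring
      have heq : κ⁻¹ * (2 * κ) ^ p = 2 ^ p * κ ^ (p - 1) := by
        rw [Real.mul_rpow (by norm_num) hκ0.le, Real.rpow_sub hκ0, Real.rpow_one]
        field_simp
      calc (∫ s in m..1, f s) ≤ κ⁻¹ * (2 * κ) ^ p := by rw [← hconst]; exact hmono
        _ = 2 ^ p * κ ^ (p - 1) := heq
    calc (∫ s in (0:ℝ)..1, f s) = (∫ s in (0:ℝ)..m, f s) + ∫ s in m..1, f s := hsplit
      _ ≤ (p - 1)⁻¹ * κ ^ (p - 1) + 2 ^ p * κ ^ (p - 1) := add_le_add hI1 hI2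
      _ = ((p - 1)⁻¹ + 2 ^ p) * κ ^ (p - 1) := by ring
  · -- p = 1 case
    refine ⟨2, by norm_num, ?_⟩
    intro κ hκ
    have hκ0 : (0:ℝ) < κ := lt_of_lt_of_le one_pos hκ
    have hκi : (0:ℝ) < κ⁻¹ := by positivity
    have hκi1 : κ⁻¹ ≤ 1 := by rw [inv_le_one_iff₀]; right; exact hκ
    set m : ℝ := 1 - κ⁻¹ with hm
    have hm0 : 0 ≤ m := by simp only [hm]; linarith
    have hm1 : m ≤ 1 := by simp only [hm]; linarith
    set f : ℝ → ℝ := fun s => (Real.sqrt ((1 - s) ^ 2 + (s / κ) ^ 2))⁻¹ with hf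
    have hfc : Continuous f :=
      g_cont.inv₀ fun x => ne_of_gt (g_pos hκ x)
    have hsplit : (∫ s in (0:ℝ)..1, f s) =
        (∫ s in (0:ℝ)..m, f s) + ∫ s in m..1, f s :=
      (intervalIntegral.integral_add_adjacent_intervals
        (hfc.intervalIntegrable 0 m) (hfc.intervalIntegrable m 1)).symm
    have hcx : ContinuousOn (fun s : ℝ => (1 - s)⁻¹) (Set.uIcc 0 m) := by
      apply ContinuousOn.inv₀ (by fun_prop)
      intro x hx
      rw [Set.uIcc_of_le hm0] at hx
      have hxm : x ≤ m := hx.2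
      have hle : κ⁻¹ ≤ 1 - x := by simp only [hm] at hxm ⊢; linarith
      exact ne_of_gt (lt_of_lt_of_le hκi hle)
    have hI1 : (∫ s in (0:ℝ)..m, f s) ≤ Real.log κ := by
      have hmono : (∫ s in (0:ℝ)..m, f s) ≤ ∫ s in (0:ℝ)..m, (1 - s)⁻¹ := by
        apply intervalIntegral.integral_mono_on hm0
          (hfc.intervalIntegrable 0 m) hcx.intervalIntegrable
        intro x hx
        have hx1 : x ≤ m := hx.2
        have hpos : 0 < 1 - x := by
          have : κ⁻¹ ≤ 1 - x := by simp only [hm] at hx1 ⊢; linarith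
          linarith
        exact inv_anti₀ hpos (g_ge_one_sub (by linarith))
      have hcomp : (∫ s in (0:ℝ)..m, (1 - s)⁻¹) = ∫ x in κ⁻¹..(1:ℝ), x⁻¹ := by
        have h := intervalIntegral.integral_comp_sub_left (a := (0:ℝ)) (b := m)
          (fun x : ℝ => x⁻¹) 1
        simpa [hm] using h
      have h0notin : (0:ℝ) ∉ Set.uIcc κ⁻¹ (1:ℝ) := by
        rw [Set.uIcc_of_le hκi1]
        intro h; exact absurd h.1 (not_le.mpr hκi)
      have hval : (∫ x in κ⁻¹..(1:ℝ), x⁻¹) = Real.log κ := by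
        rw [integral_inv h0notin, one_div, inv_inv]
      rw [← hval, ← hcomp]; exact hmono
    have hI2 : (∫ s in m..1, f s) ≤ 2 := by
      have hmono : (∫ s in m..1, f s) ≤ ∫ _ in m..1, (2 * κ) := by
        apply intervalIntegral.integral_mono_on hm1
          (hfc.intervalIntegrable m 1) intervalIntegrable_const
        intro x hx
        have h2κ : (0:ℝ) < (2 * κ)⁻¹ := by positivity
        have hb := inv_anti₀ h2κ (g_ge_inv hκ (le_trans hm0 hx.1) hx.2)
        rwa [inv_inv] at hb
      have hconst : (∫ _ in m..1, (2 * κ) : ℝ) = 2 := by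
        rw [intervalIntegral.integral_const, smul_eq_mul, hm]
        field_simp
        ring
      rw [← hconst]; exact hmono
    have hlog : 0 ≤ Real.log κ := Real.log_nonneg hκ
    calc (∫ s in (0:ℝ)..1, f s) = (∫ s in (0:ℝ)..m, f s) + ∫ s in m..1, f s := hsplit
      _ ≤ Real.log κ + 2 := add_le_add hI1 hI2
      _ ≤ 2 * (1 + Real.log κ) := by linarith
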